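/- Assume additionally (iii): C(A) ∩ ℤ^r equals the set of ℤ_{≥0}-linear combinations of a_1, …, a_N. Let α ∈ ℤ^r, p a prime, and β ∈ ℤ^r such that β/p is an apexpoint of K_{α/p} = (α/p + ℤ^r) ∩ C(A). Set Γ_β = {l ∈ ℤ_{≥0}^N : ψ(l) = β}. Then every l ∈ Γ_β has all coordinates strictly less than p (so each factorial l_1!⋯l_N! is invertible mod p), and the polynomial Ψ_β = Σ_{l ∈ Γ_β} (l_1!⋯l_N!)^{-1} v_1^{l_1}⋯v_N^{l_N} ∈ F_p[v_1, …, v_N] is a mod-p solution of the A-hypergeometric system with parameters (A, α). -/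

import Mathlib

/-- The cone `C(A)` of nonnegative real linear combinations of the integer vectors `a i`. -/
def coneOf {r N : ℕ} (a : Fin N → Fin r → ℤ) : Set (Fin r → ℝ) :=
  {x | ∃ c : Fin N → ℝ, (∀ i, 0 ≤ c i) ∧ x = ∑ i, c i • fun j => (a i j : ℝ)}

/-- `K_α = (α + ℤ^r) ∩ C(A)`. -/
def Kset {r N : ℕ} (a : Fin N → Fin r → ℤ) (α : Fin r → ℝ) : Set (Fin r → ℝ) :=
  {x | (∃ m : Fin r → ℤ, x = fun j => α j + (m j : ℝ)) ∧ x ∈ coneOf a}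

/-- `p ∈ K_α` is an apexpoint if `p ∉ q + C(A)` for every `q ∈ K_α` with `q ≠ p`. -/
def IsApex {r N : ℕ} (a : Fin N → Fin r → ℤ) (α : Fin r → ℝ) (p : Fin r → ℝ) : Prop :=
  p ∈ Kset a α ∧ ∀ q ∈ Kset a α, q ≠ p → p - q ∉ coneOf a

/-- The differential operator `∏ i ∂_i^(u i)` on `F_p[v_1,…,v_N]`. -/
noncomputable def derivMonomial (p N : ℕ) (u : Fin N → ℕ) :
    Module.End (ZMod p) (MvPolynomial (Fin N) (ZMod p)) :=
  (List.ofFn fun i : Fin N =>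
    (((MvPolynomial.pderiv i).toLinearMap :
        Module.End (ZMod p) (MvPolynomial (Fin N) (ZMod p))) ^ (u i))).prod

/-- `Φ ∈ F_p[v_1,…,v_N]` is a mod-`p` solution of the A-hypergeometric system with
parameters `(A, α)`: it is killed by all box operators `□_l`, `l ∈ L`, and satisfies the
Euler equations `(∑_k a_{k,j} v_k ∂_k) Φ = α_j Φ`. -/
def IsModpSolution {r N : ℕ} (p : ℕ) (a : Fin N → Fin r → ℤ) (α : Fin r → ℤ)
    (Φ : MvPolynomial (Fin N) (ZMod p)) : Prop :=
  (∀ l : Fin N → ℤ, (∑ i, l i • a i) = 0 →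
      derivMonomial p N (fun i => (l i).toNat) Φ =
      derivMonomial p N (fun i => (-l i).toNat) Φ) ∧
  (∀ j : Fin r,
      (∑ k, (a k j : ZMod p) • (MvPolynomial.X k * MvPolynomial.pderiv k Φ)) =
        (α j : ZMod p) • Φ)

section Helpers

open MvPolynomial Finsupp

lemma nat_mul_descFactorial (m n : ℕ) :
    m * Nat.descFactorial (m - 1) n = m.descFactorial (n + 1) := by
  cases m with
  | zero => simp
  | succ m => rw [Nat.succ_sub_one, Nat.succ_descFactorial_succ]

lemma pderiv_pow_monomial {p N : ℕ} (i : Fin N) (n : ℕ) (d : Fin N →₀ ℕ) (c : ZMod p) :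
    ((((MvPolynomial.pderiv i).toLinearMap :
        Module.End (ZMod p) (MvPolynomial (Fin N) (ZMod p))) ^ n) (monomial d c)) =
      monomial (d - Finsupp.single i n) ((Nat.descFactorial (d i) n : ZMod p) * c) := by
  induction n generalizing d c with
  | zero => simp
  | succ n ih =>
    rw [pow_succ, Module.End.mul_apply]
    have h1 : ((MvPolynomial.pderiv i).toLinearMap :
        Module.End (ZMod p) (MvPolynomial (Fin N) (ZMod p))) (monomial d c)
        = monomial (d - Finsupp.single i 1) (c * d i) := by
      simp [MvPolynomial.pderiv_monomial]
    rw [h1, ih]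
    congr 1
    · rw [tsub_tsub, ← Finsupp.single_add, add_comm 1 n]
    · have h2 : ((d - Finsupp.single i 1 : Fin N →₀ ℕ)) i = d i - 1 := by
        rw [Finsupp.tsub_apply, Finsupp.single_eq_same]
      rw [h2, ← nat_mul_descFactorial (d i) n]
      push_cast
      ring

lemma listsum_single_apply_eq_zero {N : ℕ} (i : Fin N) :
    ∀ (t : List (Fin N × ℕ)), i ∉ t.map Prod.fst →
      ((t.map fun q => Finsupp.single q.1 q.2).sum : Fin N →₀ ℕ) i = 0 := by
  intro t
  induction t with
  | nil => simp
  | cons x t ih =>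
    intro h
    simp only [List.map_cons, List.mem_cons, not_or] at h ⊢
    rw [List.sum_cons, Finsupp.add_apply, Finsupp.single_apply,
      if_neg (fun hx => h.1 hx.symm), ih h.2, add_zero]

lemma prod_map_pderiv_monomial {p N : ℕ} (d : Fin N →₀ ℕ) (c : ZMod p) :
    ∀ (L : List (Fin N × ℕ)), (L.map Prod.fst).Nodup →
      ((L.map fun q => (((MvPolynomial.pderiv q.1).toLinearMap :
          Module.End (ZMod p) (MvPolynomial (Fin N) (ZMod p))) ^ q.2)).prod)
        (MvPolynomial.monomial d c)
      = MvPolynomial.monomial (d - (L.map fun q => Finsupp.single q.1 q.2).sum)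
          ((L.map fun q => ((d q.1).descFactorial q.2 : ZMod p)).prod * c) := by
  intro L
  induction L with
  | nil => simp
  | cons x t ih =>
    intro hnd
    simp only [List.map_cons, List.nodup_cons] at hnd ⊢
    rw [List.prod_cons, Module.End.mul_apply, ih hnd.2, pderiv_pow_monomial,
      List.sum_cons, List.prod_cons]
    have hx : ((d - (t.map fun q => Finsupp.single q.1 q.2).sum : Fin N →₀ ℕ)) x.1 = d x.1 := by
      rw [Finsupp.tsub_apply, listsum_single_apply_eq_zero x.1 t hnd.1, Nat.sub_zero]
    rw [hx, tsub_tsub, add_comm ((t.map fun q => Finsupp.single q.1 q.2).sum)]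
    ring_nf

lemma derivMonomial_monomial {p N : ℕ} (u : Fin N → ℕ) (d : Fin N →₀ ℕ) (c : ZMod p) :
    derivMonomial p N u (MvPolynomial.monomial d c)
      = MvPolynomial.monomial (d - ∑ i, Finsupp.single i (u i))
          ((∏ i, ((d i).descFactorial (u i) : ZMod p)) * c) := by
  have h0 : (List.ofFn fun i : Fin N =>
      (((MvPolynomial.pderiv i).toLinearMap :
          Module.End (ZMod p) (MvPolynomial (Fin N) (ZMod p))) ^ (u i)))
      = (List.ofFn fun i : Fin N => (i, u i)).map fun q =>
          (((MvPolynomial.pderiv q.1).toLinearMap :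
          Module.End (ZMod p) (MvPolynomial (Fin N) (ZMod p))) ^ q.2) := by
    rw [List.map_ofFn]
    rfl
  have hnd : ((List.ofFn fun i : Fin N => (i, u i)).map Prod.fst).Nodup := by
    rw [List.map_ofFn]
    exact List.nodup_ofFn.mpr (fun i j h => h)
  rw [derivMonomial, h0, prod_map_pderiv_monomial d c _ hnd]
  congr 1
  · rw [List.map_ofFn, List.sum_ofFn]
    rfl
  · rw [List.map_ofFn, List.prod_ofFn]
    rfl

lemma factorial_ne_zero_zmod {p : ℕ} (hp : p.Prime) {m : ℕ} (hm : m < p) :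
    ((m.factorial : ZMod p)) ≠ 0 := by
  rw [Ne, ZMod.natCast_eq_zero_iff]
  rw [Nat.Prime.dvd_factorial hp]
  omega

lemma desc_mul_inv_factorial {p : ℕ} (hp : p.Prime) {n k : ℕ} (hk : k ≤ n) (hn : n < p) :
    (n.descFactorial k : ZMod p) * ((n.factorial : ZMod p))⁻¹
      = (((n - k).factorial : ZMod p))⁻¹ := by
  haveI : Fact p.Prime := ⟨hp⟩
  have hfac : (((n - k).factorial : ZMod p)) * (n.descFactorial k : ZMod p)
      = (n.factorial : ZMod p) := by
    exact_mod_cast congrArg (Nat.cast : ℕ → ZMod p) (Nat.factorial_mul_descFactorial hk)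
  have h1 : ((n.factorial : ZMod p)) ≠ 0 := factorial_ne_zero_zmod hp hn
  have h2 : (((n - k).factorial : ZMod p)) ≠ 0 :=
    factorial_ne_zero_zmod hp (lt_of_le_of_lt (by omega) hn)
  apply mul_left_cancel₀ h2
  rw [← mul_assoc, hfac, mul_inv_cancel₀ h1, mul_inv_cancel₀ h2]

lemma univ_sum_single_apply {N : ℕ} (u : Fin N → ℕ) (i : Fin N) :
    ((∑ k, Finsupp.single k (u k) : Fin N →₀ ℕ)) i = u i := by
  rw [Finsupp.finset_sum_apply]
  rw [Finset.sum_eq_single i (fun k _ hk => Finsupp.single_eq_of_ne' hk)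
    (fun h => absurd (Finset.mem_univ i) h)]
  exact Finsupp.single_eq_same

end Helpers

/-- if `β/p` is an apexpoint of `K_{α/p}`, then every `l ∈ ℤ_{≥0}^N` with
`ψ(l) = β` has all coordinates `< p`, and the polynomial
`Ψ_β = ∑_{l ∈ Γ_β} (l₁!⋯l_N!)⁻¹ v^l` is a mod-`p` solution with parameters `(A, α)`. -/
theorem apex_gives_modp_solution (r N : ℕ) (p : ℕ) (hp : p.Prime)
    (a : Fin N → Fin r → ℤ)
    (hspan : Submodule.span ℤ (Set.range a) = ⊤)
    (hhom : ∃ h : (Fin r → ℝ) →ₗ[ℝ] ℝ, ∀ i, h (fun j => (a i j : ℝ)) = 1)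
    (hiii : ∀ x : Fin r → ℤ, ((fun j => (x j : ℝ)) ∈ coneOf a ↔
        ∃ c : Fin N → ℕ, x = ∑ i, c i • a i))
    (α β : Fin r → ℤ)
    (happex : IsApex a (fun j => (α j : ℝ) / p) (fun j => (β j : ℝ) / p)) :
    (∀ l : Fin N → ℕ, (∑ i, (l i : ℤ) • a i) = β → ∀ i, l i < p) ∧
    ∃ Ψ : MvPolynomial (Fin N) (ZMod p),
      (∀ d : Fin N →₀ ℕ, Ψ.coeff d =
        if (∑ i, (d i : ℤ) • a i) = β
        then (∏ i, ((d i).factorial : ZMod p))⁻¹ else 0) ∧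
      IsModpSolution p a α Ψ := by
  classical
  obtain ⟨hgl, hap⟩ := happex
  obtain ⟨⟨m, hm⟩, hconeβ⟩ := hgl
  obtain ⟨h, hh⟩ := hhom
  have hp0 : (0:ℝ) < p := by exact_mod_cast hp.pos
  have hβα : ∀ j, β j = α j + p * m j := by
    intro j
    have h1 := congrFun hm j
    have h2 : (β j : ℝ) = α j + p * m j := by
      field_simp at h1
      linarith
    exact_mod_cast h2
  -- part 1
  have hless : ∀ l : Fin N → ℕ, (∑ i, (l i : ℤ) • a i) = β → ∀ i, l i < p := by
    intro l hl i
    by_contra hcon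
    push_neg at hcon
    have hβj : ∀ j, (β j : ℝ) = ∑ k, (l k : ℝ) * a k j := by
      intro j
      have h3 : (∑ k, (l k : ℤ) * a k j) = β j := by
        simpa using congrFun hl j
      exact_mod_cast h3.symm
    set q : Fin r → ℝ := fun j => (β j : ℝ)/p - (a i j : ℝ) with hq
    have hqcone : q ∈ coneOf a := by
      refine ⟨fun k => (l k : ℝ)/p - (if k = i then 1 else 0), fun k => ?_, ?_⟩
      · dsimp only
        rcases eq_or_ne k i with hk | hk
        · subst hk
          rw [if_pos rfl, sub_nonneg, le_div_iff₀ hp0, one_mul]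
          exact_mod_cast hcon
        · rw [if_neg hk, sub_zero]
          positivity
      · funext j
        show (β j : ℝ)/p - (a i j : ℝ) = _
        rw [Finset.sum_apply]
        simp only [Pi.smul_apply, smul_eq_mul, sub_mul, Finset.sum_sub_distrib]
        congr 1
        · rw [hβj j, Finset.sum_div]
          exact Finset.sum_congr rfl fun k _ => (div_mul_eq_mul_div _ _ _).symm
        · rw [Finset.sum_eq_single i (fun k _ hk => by rw [if_neg hk, zero_mul])
            (fun hmem => absurd (Finset.mem_univ i) hmem), if_pos rfl, one_mul]
    have hqK : q ∈ Kset a (fun j => (α j : ℝ)/p) := by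
      refine ⟨⟨fun j => m j - a i j, funext fun j => ?_⟩, hqcone⟩
      have h4 := congrFun hm j
      rw [hq]
      push_cast
      rw [show (β j : ℝ)/p = (α j : ℝ)/p + m j from h4]
      ring
    have hne : q ≠ fun j => (β j : ℝ)/p := by
      intro he
      have hai : ∀ j, (a i j : ℝ) = 0 := by
        intro j
        have h5 := congrFun he j
        rw [hq] at h5
        simp only at h5
        linarith
    -- h (a i) = 1 but a i = 0
      have h6 := hh i
      rw [show (fun j => (a i j : ℝ)) = 0 from funext fun j => hai j, map_zero] at h6
      exact one_ne_zero h6.symm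
    have hdiff : (fun j => (β j : ℝ)/p) - q ∈ coneOf a := by
      refine ⟨fun k => if k = i then 1 else 0,
        fun k => by dsimp only; split <;> norm_num, ?_⟩
      funext j
      have hqj : q j = (β j : ℝ)/p - (a i j : ℝ) := rfl
      rw [Pi.sub_apply, hqj, Finset.sum_apply]
      simp only [Pi.smul_apply, smul_eq_mul]
      rw [Finset.sum_eq_single i (fun k _ hk => by rw [if_neg hk, zero_mul])
        (fun hmem => absurd (Finset.mem_univ i) hmem), if_pos rfl, one_mul]
      ring
    exact hap q hqK hne hdiff
  refine ⟨hless, ?_⟩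
  haveI : Fact p.Prime := ⟨hp⟩
  set cf : (Fin N →₀ ℕ) → ZMod p := fun d => (∏ i, ((d i).factorial : ZMod p))⁻¹ with hcf
  set bigS : Finset (Fin N →₀ ℕ) := (Finset.univ : Finset (Fin N → Fin p)).image
      (fun f => Finsupp.equivFunOnFinite.symm (fun i => (f i : ℕ))) with hbigS
  have hmemBig : ∀ d : Fin N →₀ ℕ, (∀ i, d i < p) → d ∈ bigS := by
    intro d hd
    refine Finset.mem_image.mpr ⟨fun i => ⟨d i, hd i⟩, Finset.mem_univ _, ?_⟩
    ext i
    simp [Finsupp.equivFunOnFinite]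
  set T : Finset (Fin N →₀ ℕ) := bigS.filter (fun d => (∑ i, (d i : ℤ) • a i) = β) with hT
  have hTmem : ∀ d, d ∈ T ↔ (∑ i, (d i : ℤ) • a i) = β := by
    intro d
    rw [hT, Finset.mem_filter]
    exact ⟨fun h => h.2, fun h => ⟨hmemBig d (hless (fun i => d i) h), h⟩⟩
  set Ψ : MvPolynomial (Fin N) (ZMod p) := ∑ d ∈ T, MvPolynomial.monomial d (cf d) with hΨ
  have hTlt : ∀ d ∈ T, ∀ i, d i < p := by
    intro d hd
    exact hless (fun i => d i) ((hTmem d).mp hd)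
  -- the key derivative computation
  have hEd : ∀ (u : Fin N → ℕ), derivMonomial p N u Ψ
      = ∑ e ∈ bigS.filter (fun e => (∑ i, ((e i : ℤ) + u i) • a i) = β),
          MvPolynomial.monomial e (cf e) := by
    intro u
    rw [hΨ, map_sum]
    simp only [derivMonomial_monomial]
    rw [← Finset.sum_filter_of_ne
      (p := fun d => (∑ i, Finsupp.single i (u i) : Fin N →₀ ℕ) ≤ d) ?_]
    swap
    · intro d hd hne
      by_contra hle
      apply hne
      have : ∃ i, ¬ (u i ≤ d i) := by
        by_contra hall
        push_neg at hall
        exact hle (Finsupp.le_def.mpr fun i => by rw [univ_sum_single_apply]; exact hall i)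
      obtain ⟨i, hi⟩ := this
      have hz : (((d i).descFactorial (u i) : ℕ) : ZMod p) = 0 := by
        rw [Nat.descFactorial_eq_zero_iff_lt.mpr (by omega)]
        exact Nat.cast_zero
      rw [Finset.prod_eq_zero (Finset.mem_univ i) hz, zero_mul, map_zero]
    · refine Finset.sum_nbij' (i := fun d => d - ∑ k, Finsupp.single k (u k))
        (j := fun e => e + ∑ k, Finsupp.single k (u k)) ?_ ?_ ?_ ?_ ?_
      · intro d hd
        rw [Finset.mem_filter] at hd ⊢
        obtain ⟨hdT, hdle⟩ := hd
        have hle : ∀ i, u i ≤ d i := fun i => by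
          have := Finsupp.le_def.mp hdle i
          rwa [univ_sum_single_apply] at this
        have hlt := hTlt d hdT
        constructor
        · apply hmemBig
          intro i
          rw [Finsupp.tsub_apply, univ_sum_single_apply]
          exact lt_of_le_of_lt (Nat.sub_le _ _) (hlt i)
        · have : ∀ i, (((d - ∑ k, Finsupp.single k (u k) : Fin N →₀ ℕ) i : ℤ) + u i) = d i := by
            intro i
            rw [Finsupp.tsub_apply, univ_sum_single_apply]
            have := hle i
            push_cast [Nat.sub_add_cancel this]
            omega
          simp only [this]
          exact (hTmem d).mp hdT
      · intro e he
        rw [Finset.mem_filter] at he ⊢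
        obtain ⟨heB, heψ⟩ := he
        have hψ : (∑ i, (((e + ∑ k, Finsupp.single k (u k) : Fin N →₀ ℕ) i : ℤ)) • a i) = β := by
          have : ∀ i, ((e + ∑ k, Finsupp.single k (u k) : Fin N →₀ ℕ) i : ℤ) = (e i : ℤ) + u i := by
            intro i
            rw [Finsupp.add_apply, univ_sum_single_apply]
            push_cast
            ring
          simp only [this]
          exact heψ
        exact ⟨(hTmem _).mpr hψ, le_add_self⟩
      · intro d hd
        rw [Finset.mem_filter] at hd
        exact tsub_add_cancel_of_le hd.2
      · intro e he
        exact add_tsub_cancel_right _ _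
      · intro d hd
        rw [Finset.mem_filter] at hd
        obtain ⟨hdT, hdle⟩ := hd
        have hle : ∀ i, u i ≤ d i := fun i => by
          have := Finsupp.le_def.mp hdle i
          rwa [univ_sum_single_apply] at this
        have hlt := hTlt d hdT
        congr 1
        rw [hcf]
        simp only
        rw [← Finset.prod_inv_distrib, ← Finset.prod_mul_distrib,
          ← Finset.prod_inv_distrib]
        refine Finset.prod_congr rfl fun i _ => ?_
        rw [Finsupp.tsub_apply, univ_sum_single_apply]
        exact desc_mul_inv_factorial hp (hle i) (hlt i)
  refine ⟨Ψ, ?_, ?_, ?_⟩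
  · -- coefficients
    intro d
    rw [hΨ, MvPolynomial.coeff_sum]
    simp only [MvPolynomial.coeff_monomial]
    rw [Finset.sum_ite_eq' T d cf]
    by_cases hd : (∑ i, (d i : ℤ) • a i) = β
    · rw [if_pos ((hTmem d).mpr hd), if_pos hd]
    · rw [if_neg (fun hmem => hd ((hTmem d).mp hmem)), if_neg hd]
  · -- box operators
    intro l hl
    rw [hEd, hEd]
    have hsum : (∑ i, (((l i).toNat : ℤ)) • a i) = (∑ i, (((-l i).toNat : ℤ)) • a i) := by
      rw [← sub_eq_zero, ← Finset.sum_sub_distrib]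
      rw [← hl]
      refine Finset.sum_congr rfl fun i _ => ?_
      rw [← sub_smul]
      congr 1
      omega
    congr 1
    apply Finset.filter_congr
    intro e _
    simp only [add_smul, Finset.sum_add_distrib, hsum]
  · -- Euler equations
    intro j
    rw [hΨ, Finset.smul_sum]
    simp only [map_sum, Finset.mul_sum, Finset.smul_sum]
    rw [Finset.sum_comm]
    refine Finset.sum_congr rfl fun d hd => ?_
    have hterm : ∀ k, (MvPolynomial.X k : MvPolynomial (Fin N) (ZMod p)) *
        MvPolynomial.pderiv k (MvPolynomial.monomial d (cf d))
        = ((d k : ZMod p)) • MvPolynomial.monomial d (cf d) := by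
      intro k
      rw [MvPolynomial.pderiv_monomial]
      by_cases hk : d k = 0
      · simp [hk]
      · rw [MvPolynomial.X, MvPolynomial.monomial_mul]
        have hle : Finsupp.single k 1 ≤ d :=
          Finsupp.single_le_iff.mpr (Nat.one_le_iff_ne_zero.mpr hk)
        rw [add_tsub_cancel_of_le hle, MvPolynomial.smul_monomial]
        congr 1
        rw [one_mul, smul_eq_mul, mul_comm]
    simp only [hterm, smul_smul]
    rw [← Finset.sum_smul]
    congr 1
    have hψd : (∑ i, (d i : ℤ) • a i) = β := (hTmem d).mp hd
    have hj : (∑ k, (d k : ℤ) * a k j) = β j := by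
      simpa using congrFun hψd j
    have hcast : (∑ k, (a k j : ZMod p) * (d k : ZMod p)) = ((β j : ℤ) : ZMod p) := by
      rw [← hj]
      push_cast
      refine Finset.sum_congr rfl fun k _ => mul_comm _ _
    rw [hcast, hβα j]
    push_cast
    simp
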